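/- arXiv:2111.14654 — 9 statements merged into one kernel-verified Lean document; each statement's English description precedes it below -/
import Mathlib

section
/- Let I be a finite set of items, let B be a real number with 0 < B < 1, and let γ : I → ℝ be a nonnegative weight function with ∑_{a ∈ I} γ(a) = 1. Let v be a set function on subsets of I satisfying v(S) ≥ ∑_{a ∈ S} γ(a) for every S ⊆ I. Suppose I is partitioned into two disjoint sets I₁ and I₂ (I₁ ∪ I₂ = I) such that ∑_{a ∈ I₂} √B · γ(a) ≤ B. Then v(I₁) − ∑_{a ∈ I₁} √B · γ(a) ≥ (1 − √B)². -/
/-- Deterministic core of the XOS lower bound for sequential auctions (Theorem 1). -/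
theorem xos_sequential_lower_bound {ι : Type*} [DecidableEq ι] (I : Finset ι) (B : ℝ)
    (hB0 : 0 < B) (hB1 : B < 1)
    (γ : ι → ℝ) (hγ : ∀ a ∈ I, 0 ≤ γ a) (hγsum : ∑ a ∈ I, γ a = 1)
    (v : Finset ι → ℝ) (hv : ∀ S ⊆ I, ∑ a ∈ S, γ a ≤ v S)
    (I₁ I₂ : Finset ι) (hdisj : Disjoint I₁ I₂) (hunion : I₁ ∪ I₂ = I)
    (hbudget : ∑ a ∈ I₂, Real.sqrt B * γ a ≤ B) :
    (1 - Real.sqrt B) ^ 2 ≤ v I₁ - ∑ a ∈ I₁, Real.sqrt B * γ a := by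
  set s := ∑ a ∈ I₁, γ a with hs
  have hsplit : s + ∑ a ∈ I₂, γ a = 1 := by
    rw [hs, ← Finset.sum_union hdisj, hunion, hγsum]
  have hsqB : 0 < Real.sqrt B := Real.sqrt_pos.2 hB0
  have hsqB1 : Real.sqrt B < 1 := by
    rw [show (1:ℝ) = Real.sqrt 1 by simp]
    exact Real.sqrt_lt_sqrt hB0.le hB1
  have h2 : Real.sqrt B * (1 - s) ≤ B := by
    have : ∑ a ∈ I₂, Real.sqrt B * γ a = Real.sqrt B * (1 - s) := by
      rw [← Finset.mul_sum]; congr 1; linarith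
    linarith [hbudget, this ▸ hbudget]
  have h3 : 1 - s ≤ Real.sqrt B := by
    have hBeq : Real.sqrt B * Real.sqrt B = B := Real.mul_self_sqrt hB0.le
    nlinarith
  have hvI₁ : s ≤ v I₁ := hv I₁ (by rw [← hunion]; exact Finset.subset_union_left)
  have hbid : ∑ a ∈ I₁, Real.sqrt B * γ a = Real.sqrt B * s := by
    rw [Finset.mul_sum]
  rw [hbid]
  nlinarith
end

section
/- For every integer m ≥ 2 and every real number x with 1/m² ≤ x ≤ (m−1)/m, the quantity α̃ = 1 − 2m(1 − √x) + 2√(m(m−1))·(1 − √x) satisfies α̃ ≥ 0. -/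
/-- Claim 1: the adversary's candidate bid ratio α̃ is nonnegative. -/
theorem alpha_tilde_nonneg (m : ℕ) (hm : 2 ≤ m) (x : ℝ)
    (hx1 : 1 / (m : ℝ) ^ 2 ≤ x) (hx2 : x ≤ ((m : ℝ) - 1) / m) :
    0 ≤ 1 - 2 * (m : ℝ) * (1 - Real.sqrt x)
        + 2 * Real.sqrt ((m : ℝ) * ((m : ℝ) - 1)) * (1 - Real.sqrt x) := by
  have hM : (2 : ℝ) ≤ (m : ℝ) := by exact_mod_cast hm
  have hMpos : (0 : ℝ) < (m : ℝ) := by linarith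
  set M : ℝ := (m : ℝ)
  set s : ℝ := Real.sqrt (M * (M - 1)) with hs
  set r : ℝ := Real.sqrt x with hr
  have hsnn : 0 ≤ s := Real.sqrt_nonneg _
  have hrnn : 0 ≤ r := Real.sqrt_nonneg _
  have hxnn : 0 ≤ x := by
    have : (0:ℝ) < 1 / M ^ 2 := by positivity
    linarith
  have hs2 : s ^ 2 = M * (M - 1) := Real.sq_sqrt (by nlinarith)
  have hr2 : r ^ 2 = x := Real.sq_sqrt hxnn
  -- r ≥ 1/M, i.e. M * r ≥ 1
  have hx1' : 1 / M ^ 2 ≤ r ^ 2 := by rw [hr2]; exact hx1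
  have hx1'' : 1 ≤ x * M ^ 2 := (div_le_iff₀ (by positivity)).mp hx1
  have hMr : 1 ≤ M * r := by
    nlinarith [hx1'', hr2, mul_nonneg hMpos.le hrnn]
  -- s ≤ M
  have hsM : s ≤ M := by nlinarith [sq_nonneg (s - M)]
  -- key: M * (2M - 3) ≤ 2 * (M - 1) * s
  have key : M * (2 * M - 3) ≤ 2 * (M - 1) * s := by
    nlinarith [hs2, hsnn, sq_nonneg (2 * (M - 1) * s - M * (2 * M - 3)),
      mul_nonneg (mul_nonneg (by linarith : (0:ℝ) ≤ 2 * (M - 1)) hsnn)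
        (by nlinarith : (0:ℝ) ≤ M * (2 * M - 3))]
  have hprod : 0 ≤ (M * r - 1) * (M - s) :=
    mul_nonneg (by linarith) (by linarith)
  nlinarith [hprod, key, hMpos]
end

section
/- For every integer m ≥ 2 and every real number x with 1/m² ≤ x ≤ (m−1)/m, the quantity α̃ = 1 − 2m(1 − √x) + 2√(m(m−1))·(1 − √x) satisfies α̃ ≤ min(1, m·x). -/
/-- Claim 2: the adversary's candidate bid ratio α̃ is at most α_max = min(1, m·x). -/
theorem alpha_tilde_le_alpha_max (m : ℕ) (hm : 2 ≤ m) (x : ℝ)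
    (hx1 : 1 / (m : ℝ) ^ 2 ≤ x) (hx2 : x ≤ ((m : ℝ) - 1) / m) :
    1 - 2 * (m : ℝ) * (1 - Real.sqrt x)
        + 2 * Real.sqrt ((m : ℝ) * ((m : ℝ) - 1)) * (1 - Real.sqrt x)
      ≤ min 1 ((m : ℝ) * x) := by
  have hm2 : (2 : ℝ) ≤ (m : ℝ) := by exact_mod_cast hm
  have hmpos : (0 : ℝ) < m := by linarith
  have hx0 : (0 : ℝ) ≤ x := le_trans (by positivity) hx1
  set s := Real.sqrt x with hs
  set c := Real.sqrt ((m : ℝ) * ((m : ℝ) - 1)) with hc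
  have hs0 : 0 ≤ s := Real.sqrt_nonneg x
  have hc0 : 0 ≤ c := Real.sqrt_nonneg _
  have hsx : s ^ 2 = x := Real.sq_sqrt hx0
  have hcx : c ^ 2 = (m : ℝ) * ((m : ℝ) - 1) := Real.sq_sqrt (by nlinarith)
  have hs1 : s ≤ 1 := by
    rw [hs]
    rw [show (1:ℝ) = Real.sqrt 1 by simp]; apply Real.sqrt_le_sqrt
    calc x ≤ ((m : ℝ) - 1) / m := hx2
      _ ≤ 1 := by rw [div_le_one hmpos]; linarith
  have hcm : c ≤ m := by nlinarith
  apply le_min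
  · nlinarith [mul_nonneg (sub_nonneg.2 hcm) (sub_nonneg.2 hs1)]
  · nlinarith [sq_nonneg ((m : ℝ) * s - ((m : ℝ) - c)), hmpos]
end

section
/- For every integer m ≥ 2 and every real number x with 1/m² ≤ x ≤ (m−1)/m, setting α̃ = 1 − 2m(1 − √x) + 2√(m(m−1))·(1 − √x) and f(y) = (1 − √y)², it holds that (1 − α̃)/m + ((m−1)/m)·( f(m·x/(m−1)) + 1/√(m−1) ) ≤ f(x) + 1/√m. -/
/-- Claim 3: g_m(x, α̃) ≤ f(x) + 1/√m, with the induction hypothesis bound plugged in. -/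
theorem g_bound (m : ℕ) (hm : 2 ≤ m) (x : ℝ)
    (hx1 : 1 / (m : ℝ) ^ 2 ≤ x) (hx2 : x ≤ ((m : ℝ) - 1) / m) :
    (1 - (1 - 2 * (m : ℝ) * (1 - Real.sqrt x)
            + 2 * Real.sqrt ((m : ℝ) * ((m : ℝ) - 1)) * (1 - Real.sqrt x))) / m
      + (((m : ℝ) - 1) / m)
          * ((1 - Real.sqrt ((m : ℝ) * x / ((m : ℝ) - 1))) ^ 2
              + 1 / Real.sqrt ((m : ℝ) - 1))
      ≤ (1 - Real.sqrt x) ^ 2 + 1 / Real.sqrt m := by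
  have hm2 : (2:ℝ) ≤ (m:ℝ) := by exact_mod_cast hm
  have hm0 : (0:ℝ) < m := by linarith
  have hm1 : (0:ℝ) < (m:ℝ) - 1 := by linarith
  have hx0 : (0:ℝ) ≤ x := le_trans (by positivity) hx1
  have hsm : Real.sqrt m ^ 2 = (m:ℝ) := Real.sq_sqrt hm0.le
  have hsn : Real.sqrt ((m:ℝ)-1) ^ 2 = (m:ℝ) - 1 := Real.sq_sqrt hm1.le
  have hsx : Real.sqrt x ^ 2 = x := Real.sq_sqrt hx0
  have hsm0 : 0 < Real.sqrt m := Real.sqrt_pos.mpr hm0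
  have hsn0 : 0 < Real.sqrt ((m:ℝ)-1) := Real.sqrt_pos.mpr hm1
  have hsn1 : 1 ≤ Real.sqrt ((m:ℝ)-1) := by
    nlinarith [hsn, hsn0]
  have h1 : Real.sqrt ((m:ℝ) * ((m:ℝ)-1)) = Real.sqrt m * Real.sqrt ((m:ℝ)-1) :=
    Real.sqrt_mul hm0.le _
  have h2 : Real.sqrt ((m:ℝ) * x / ((m:ℝ)-1))
      = Real.sqrt m * Real.sqrt x / Real.sqrt ((m:ℝ)-1) := by
    rw [Real.sqrt_div (by positivity) , Real.sqrt_mul hm0.le]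
  have hkey : (Real.sqrt m - Real.sqrt ((m:ℝ)-1)) * (Real.sqrt m + Real.sqrt ((m:ℝ)-1)) = 1 := by
    nlinarith [hsm, hsn]
  have hdiff : 0 < Real.sqrt m - Real.sqrt ((m:ℝ)-1) := by nlinarith
  have hdiff1 : Real.sqrt m - Real.sqrt ((m:ℝ)-1) ≤ 1 := by nlinarith
  rw [h1, h2]
  set a := Real.sqrt m with ha
  set b := Real.sqrt ((m:ℝ)-1) with hb
  set s := Real.sqrt x with hs
  rw [← hsn, ← hsm]
  have han : a ≠ 0 := ne_of_gt hsm0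
  have hbn : b ≠ 0 := ne_of_gt hsn0
  have heq : (1 - (1 - 2 * a^2 * (1 - s) + 2 * (a * b) * (1 - s))) / a^2
      + b^2 / a^2 * ((1 - a * s / b) ^ 2 + 1 / b)
      = (1 - s) ^ 2 + 1 / a + ((a - b)^2 - (a - b)) / a^2 := by
    field_simp
    ring
  rw [heq]
  have hle : ((a - b)^2 - (a - b)) / a^2 ≤ 0 := by
    apply div_nonpos_of_nonpos_of_nonneg _ (sq_nonneg a)
    nlinarith
  linarith
end

section
/- For every integer m ≥ 2 and every real number x with 1/m² ≤ x ≤ (m−1)/m, setting α̃ = 1 − 2m(1 − √x) + 2√(m(m−1))·(1 − √x) and f(y) = (1 − √y)², it holds that ((m−1)/m)·( f((m·x − α̃)/(m−1)) + 1/√(m−1) ) ≤ f(x) + 1/√m. -/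
/-- Claim 4: h_m(x, α̃) ≤ f(x) + 1/√m, with the induction hypothesis bound plugged in. -/
theorem h_bound (m : ℕ) (hm : 2 ≤ m) (x : ℝ)
    (hx1 : 1 / (m : ℝ) ^ 2 ≤ x) (hx2 : x ≤ ((m : ℝ) - 1) / m) :
    (((m : ℝ) - 1) / m)
        * ((1 - Real.sqrt (((m : ℝ) * x
              - (1 - 2 * (m : ℝ) * (1 - Real.sqrt x)
                  + 2 * Real.sqrt ((m : ℝ) * ((m : ℝ) - 1)) * (1 - Real.sqrt x)))
              / ((m : ℝ) - 1))) ^ 2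
            + 1 / Real.sqrt ((m : ℝ) - 1))
      ≤ (1 - Real.sqrt x) ^ 2 + 1 / Real.sqrt m := by
  have hM : (2:ℝ) ≤ (m:ℝ) := by exact_mod_cast hm
  set M := (m:ℝ) with hMdef
  have hMpos : (0:ℝ) < M := by linarith
  have hx0 : (0:ℝ) ≤ x := le_trans (by positivity) hx1
  set s := Real.sqrt x with hsdef
  have hs2 : s ^ 2 = x := Real.sq_sqrt hx0
  have hs0 : 0 ≤ s := Real.sqrt_nonneg x
  set u := Real.sqrt M with hudef
  set v := Real.sqrt (M - 1) with hvdef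
  have hu2 : u ^ 2 = M := Real.sq_sqrt (by linarith)
  have hv2 : v ^ 2 = M - 1 := Real.sq_sqrt (by linarith)
  have hu0 : 0 < u := Real.sqrt_pos.2 (by linarith)
  have hv0 : 0 < v := Real.sqrt_pos.2 (by linarith)
  have hvu : v ≤ u := Real.sqrt_le_sqrt (by linarith)
  have hmul : Real.sqrt (M * (M - 1)) = u * v := Real.sqrt_mul (by linarith) _
  have hsM : 1 / M ≤ s := by
    rw [hsdef]
    have h1 : ((1:ℝ)/M) ^ 2 ≤ x := by
      rw [div_pow, one_pow]; exact hx1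
    have := Real.sqrt_le_sqrt h1
    rwa [Real.sqrt_sq (by positivity)] at this
  have hs1 : s ≤ 1 := by
    rw [hsdef]
    have : x ≤ 1 := le_trans hx2 (by rw [div_le_one hMpos]; linarith)
    simpa using Real.sqrt_le_sqrt this
  rw [hmul]
  clear_value M s u v
  clear hx1 hx2 hsdef hudef hvdef hMdef hmul
  -- derived facts
  have hMs : (1:ℝ) ≤ s * M := (div_le_iff₀ hMpos).mp hsM
  have hkey : M * (1 - s) ^ 2 ≤ M - 1 := by
    have h1 : M * (1 - s) ≤ M - 1 := by nlinarith
    nlinarith [mul_le_mul_of_nonneg_right h1 (sub_nonneg.2 hs1)]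
  have huv : u * (1 - s) ≤ v := by
    nlinarith [hkey, hu2, hv2, hu0.le, hv0.le,
      mul_nonneg hu0.le (by linarith : (0:ℝ) ≤ 1 - s),
      sq_nonneg (u * (1 - s) + v)]
  have hMne : M - 1 ≠ 0 := by linarith
  have hvne : v ≠ 0 := ne_of_gt hv0
  have hnum : M * x - (1 - 2 * M * (1 - s) + 2 * (u * v) * (1 - s))
      = (v - u * (1 - s)) ^ 2 := by
    linear_combination (-M) * hs2 + (-(1 - s)^2) * hu2 + (-1) * hv2
  have hE : (M * x - (1 - 2 * M * (1 - s) + 2 * (u * v) * (1 - s))) / (M - 1)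
      = ((v - u * (1 - s)) / v) ^ 2 := by
    rw [hnum, div_pow, hv2]
  rw [hE, Real.sqrt_sq (div_nonneg (by linarith) hv0.le)]
  have h1m : 1 - (v - u * (1 - s)) / v = u * (1 - s) / v := by
    field_simp
    ring
  rw [h1m]
  have e1 : ((M - 1) / M) * ((u * (1 - s) / v) ^ 2) = (1 - s) ^ 2 := by
    rw [div_pow, mul_pow, hu2, hv2]
    field_simp
  have e3 : v / M ≤ 1 / u := by
    rw [div_le_div_iff₀ hMpos hu0]
    nlinarith [mul_le_mul_of_nonneg_left hvu hu0.le]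
  calc ((M - 1) / M) * ((u * (1 - s) / v) ^ 2 + 1 / v)
      = (1 - s) ^ 2 + ((M - 1) / M) * (1 / v) := by rw [mul_add, e1]
    _ = (1 - s) ^ 2 + v / M := by
        rw [← hv2]; field_simp
    _ ≤ (1 - s) ^ 2 + 1 / u := by linarith
end

section
/- For every integer m ≥ 2 and every real number x with 1/m² ≤ x ≤ (m−1)/m, setting α̃ = 1 − 2m(1 − √x) + 2√(m(m−1))·(1 − √x), the following exact identity holds: (1 − √x)² = ((m−1)/m)·( 1 − √((m·x − α̃)/(m−1)) )². Equivalently, 2√x − (1 + α̃)/m = 2·((m−1)/m)·√((m·x − α̃)/(m−1)). -/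
/-- The exact algebraic identity inside Claim 4: f(x) = ((m-1)/m)·f((m·x − α̃)/(m−1)),
    equivalently 2√x − (1 + α̃)/m = 2·((m−1)/m)·√((m·x − α̃)/(m−1)). -/
theorem f_scaling_identity (m : ℕ) (hm : 2 ≤ m) (x : ℝ)
    (hx1 : 1 / (m : ℝ) ^ 2 ≤ x) (hx2 : x ≤ ((m : ℝ) - 1) / m) :
    (1 - Real.sqrt x) ^ 2
        = (((m : ℝ) - 1) / m)
            * (1 - Real.sqrt (((m : ℝ) * x
                - (1 - 2 * (m : ℝ) * (1 - Real.sqrt x)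
                    + 2 * Real.sqrt ((m : ℝ) * ((m : ℝ) - 1)) * (1 - Real.sqrt x)))
                / ((m : ℝ) - 1))) ^ 2
    ∧ 2 * Real.sqrt x
        - (1 + (1 - 2 * (m : ℝ) * (1 - Real.sqrt x)
            + 2 * Real.sqrt ((m : ℝ) * ((m : ℝ) - 1)) * (1 - Real.sqrt x))) / m
        = 2 * (((m : ℝ) - 1) / m)
            * Real.sqrt (((m : ℝ) * x
                - (1 - 2 * (m : ℝ) * (1 - Real.sqrt x)
                    + 2 * Real.sqrt ((m : ℝ) * ((m : ℝ) - 1)) * (1 - Real.sqrt x)))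
                / ((m : ℝ) - 1)) := by
  have hm' : (2:ℝ) ≤ (m:ℝ) := by exact_mod_cast hm
  have hm0 : (0:ℝ) < (m:ℝ) := by linarith
  have hm1 : (0:ℝ) < (m:ℝ) - 1 := by linarith
  set s := Real.sqrt x with hs
  set t := Real.sqrt ((m:ℝ) * ((m:ℝ) - 1)) with ht
  have hx0 : 0 ≤ x := le_trans (by positivity) hx1
  have hs0 : 0 ≤ s := Real.sqrt_nonneg x
  have hs2 : s ^ 2 = x := Real.sq_sqrt hx0
  have hs_lb : 1 / (m:ℝ) ≤ s := by
    have h := Real.sqrt_le_sqrt hx1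
    rwa [show (1 / (m:ℝ) ^ 2) = (1 / m) ^ 2 by ring,
      Real.sqrt_sq (by positivity)] at h
  have hs_ub : s ≤ 1 := by
    rw [hs, show (1:ℝ) = Real.sqrt 1 by simp]
    apply Real.sqrt_le_sqrt
    have : ((m:ℝ) - 1) / m ≤ 1 := by
      rw [div_le_one hm0]; linarith
    linarith
  have ht2 : t ^ 2 = (m:ℝ) * ((m:ℝ) - 1) := Real.sq_sqrt (by positivity)
  have ht0 : 0 ≤ t := Real.sqrt_nonneg _
  have ht_ub : t ≤ (m:ℝ) := by
    have h := Real.sqrt_le_sqrt (show (m:ℝ) * ((m:ℝ) - 1) ≤ (m:ℝ)^2 by nlinarith)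
    rwa [Real.sqrt_sq hm0.le] at h
  have hms : 1 ≤ (m:ℝ) * s := by
    have h := mul_le_mul_of_nonneg_left hs_lb hm0.le
    rwa [mul_one_div, div_self hm0.ne'] at h
  have hnn : 0 ≤ 1 - t * (1 - s) / ((m:ℝ) - 1) := by
    have h1 : t * (1 - s) ≤ (m:ℝ) * (1 - s) :=
      mul_le_mul_of_nonneg_right ht_ub (by linarith)
    have h2 : (m:ℝ) * (1 - s) ≤ (m:ℝ) - 1 := by nlinarith
    have : t * (1 - s) / ((m:ℝ) - 1) ≤ 1 := by
      rw [div_le_one hm1]; linarith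
    linarith
  have key : Real.sqrt (((m:ℝ) * x
      - (1 - 2 * (m:ℝ) * (1 - s) + 2 * t * (1 - s))) / ((m:ℝ) - 1))
      = 1 - t * (1 - s) / ((m:ℝ) - 1) := by
    have harg : ((m:ℝ) * x - (1 - 2 * (m:ℝ) * (1 - s) + 2 * t * (1 - s)))
        / ((m:ℝ) - 1) = (1 - t * (1 - s) / ((m:ℝ) - 1)) ^ 2 := by
      rw [← hs2]
      field_simp
      linear_combination (-(1 - s)^2) * ht2
    rw [harg, Real.sqrt_sq hnn]
  rw [key]
  constructor
  · field_simp
    linear_combination (-(1 - s)^2) * ht2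
  · field_simp
    ring
end

section
/- Let I be a finite set of items, let B be a real number with 0 < B < 1, and let γ : I → ℝ be a nonnegative weight function with ∑_{a ∈ I} γ(a) = 1. Let v be a set function on subsets of I satisfying v(S) ≥ ∑_{a ∈ S} γ(a) for every S ⊆ I. Let b : I → ℝ be nonnegative bids with ∑_{a ∈ I} b(a) ≤ B, and let I₁ ⊆ I be any subset such that b(a) ≥ γ(a) for every a ∉ I₁. Then v(I₁) − ∑_{a ∈ I₁} b(a) ≥ 1 − B. -/
/-- Core of Theorem 3: second-price simultaneous auction guarantees profit at least 1 − B. -/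
theorem simultaneous_second_price_bound {ι : Type*} (I : Finset ι) (B : ℝ)
    (hB0 : 0 < B) (hB1 : B < 1)
    (γ : ι → ℝ) (hγ : ∀ a ∈ I, 0 ≤ γ a) (hγsum : ∑ a ∈ I, γ a = 1)
    (v : Finset ι → ℝ) (hv : ∀ S ⊆ I, ∑ a ∈ S, γ a ≤ v S)
    (b : ι → ℝ) (hb : ∀ a ∈ I, 0 ≤ b a) (hbud : ∑ a ∈ I, b a ≤ B)
    (I₁ : Finset ι) (hI₁ : I₁ ⊆ I)
    (hlose : ∀ a ∈ I, a ∉ I₁ → γ a ≤ b a) :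
    1 - B ≤ v I₁ - ∑ a ∈ I₁, b a := by
  classical
  have hsplitγ : ∑ a ∈ I₁, γ a + ∑ a ∈ I \ I₁, γ a = 1 := by
    rw [add_comm, Finset.sum_sdiff hI₁, hγsum]
  have hsplitb : ∑ a ∈ I₁, b a + ∑ a ∈ I \ I₁, b a = ∑ a ∈ I, b a := by
    rw [add_comm, Finset.sum_sdiff hI₁]
  have h1 : ∑ a ∈ I \ I₁, γ a ≤ ∑ a ∈ I \ I₁, b a := by
    apply Finset.sum_le_sum
    intro a ha
    rw [Finset.mem_sdiff] at ha
    exact hlose a ha.1 ha.2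
  have h2 := hv I₁ hI₁
  linarith
end

section
/- Let I be a finite index set, let γ : I → ℝ be nonnegative with ∑_{i ∈ I} γ(i) = 1, let B ∈ (0,1), and let b : I → ℝ satisfy 0 ≤ b(i) ≤ 1 for all i and ∑_{i ∈ I} γ(i)·b(i) ≤ B. Let X = (X_i)_{i ∈ I} be independent random variables each uniformly distributed on [0,1] (i.e. the product of Lebesgue measure restricted to [0,1] over I). Then the expectation E[ ∑_{i ∈ I} γ(i)·(1 − X_i)·𝟙[X_i > b(i)] ] ≥ (1 − B)²/2. -/
open MeasureTheory

section aux

variable {ι : Type*} [Fintype ι]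

lemma eval_measurePreserving (μ : ι → Measure ℝ) [∀ i, IsProbabilityMeasure (μ i)]
    (i : ι) : MeasurePreserving (Function.eval i) (Measure.pi μ) (μ i) := by
  classical
  refine ⟨measurable_pi_apply i, ?_⟩
  ext s hs
  rw [Measure.map_apply (measurable_pi_apply i) hs, Set.eval_preimage,
    Measure.pi_pi]
  rw [Finset.prod_eq_single i]
  · simp
  · intro j _ hj
    simp [Function.update_of_ne hj]
  · simp

open intervalIntegral in
lemma one_dim_integral (c : ℝ) (hc0 : 0 ≤ c) (hc1 : c ≤ 1) :
    ∫ x, (1 - x) * (if c < x then (1 : ℝ) else 0)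
      ∂(volume.restrict (Set.Icc (0 : ℝ) 1)) = (1 - c) ^ 2 / 2 := by
  have hfun : ∀ x : ℝ, (1 - x) * (if c < x then (1 : ℝ) else 0)
      = Set.indicator (Set.Ioi c) (fun x => 1 - x) x := by
    intro x
    by_cases h : c < x <;> simp [Set.indicator, h]
  simp_rw [hfun]
  rw [MeasureTheory.integral_indicator measurableSet_Ioi, Measure.restrict_restrict measurableSet_Ioi]
  have hset : Set.Ioi c ∩ Set.Icc (0 : ℝ) 1 = Set.Ioc c 1 := by
    ext x
    simp only [Set.mem_inter_iff, Set.mem_Ioi, Set.mem_Icc, Set.mem_Ioc]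
    constructor
    · rintro ⟨h1, _, h3⟩; exact ⟨h1, h3⟩
    · rintro ⟨h1, h2⟩; exact ⟨h1, le_trans hc0 h1.le, h2⟩
  rw [hset, ← intervalIntegral.integral_of_le hc1]
  have : (∫ x in c..1, (1 - x)) = (∫ x in c..1, (1 : ℝ)) - ∫ x in c..1, x :=
    intervalIntegral.integral_sub intervalIntegrable_const intervalIntegrable_id
  rw [this, integral_one, integral_id]
  ring

end aux

/-- Theorem 4: the randomized strategy in the simultaneous first-price auction
    guarantees an expected profit of at least (1 − B)²/2. -/
theorem randomized_first_price_bound {ι : Type*} [Fintype ι]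
    (γ : ι → ℝ) (hγ : ∀ i, 0 ≤ γ i) (hγsum : ∑ i, γ i = 1)
    (B : ℝ) (hB0 : 0 < B) (hB1 : B < 1)
    (b : ι → ℝ) (hb0 : ∀ i, 0 ≤ b i) (hb1 : ∀ i, b i ≤ 1)
    (hbud : ∑ i, γ i * b i ≤ B) :
    (1 - B) ^ 2 / 2
      ≤ ∫ X : ι → ℝ,
          (∑ i, γ i * (1 - X i) * (if b i < X i then (1 : ℝ) else 0))
          ∂(Measure.pi fun _ : ι => volume.restrict (Set.Icc (0 : ℝ) 1)) := by
  classical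
  set μ0 : Measure ℝ := volume.restrict (Set.Icc (0 : ℝ) 1) with hμ0
  have : IsProbabilityMeasure μ0 := by
    constructor
    rw [hμ0, Measure.restrict_apply MeasurableSet.univ, Set.univ_inter,
      Real.volume_Icc]
    norm_num
  set μ : Measure (ι → ℝ) := Measure.pi fun _ : ι => μ0 with hμ
  -- the single-item functions
  set g : ι → ℝ → ℝ := fun i x => γ i * ((1 - x) * (if b i < x then (1 : ℝ) else 0))
    with hg
  have hgmeas : ∀ i, Measurable (g i) := by
    intro i
    apply Measurable.mul measurable_const
    apply Measurable.mul (by fun_prop)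
    exact Measurable.ite (measurableSet_lt measurable_const measurable_id) measurable_const measurable_const
  have hgint : ∀ i, Integrable (g i) μ0 := by
    intro i
    refine Integrable.mono' (integrable_const (γ i)) ((hgmeas i).aestronglyMeasurable) ?_
    filter_upwards [ae_restrict_mem measurableSet_Icc] with x hx
    rw [Set.mem_Icc] at hx
    rw [Real.norm_eq_abs, abs_mul, abs_mul]
    by_cases h : b i < x
    · simp only [h, if_true, abs_one, mul_one]
      calc |γ i| * |1 - x| ≤ |γ i| * 1 := by
            apply mul_le_mul_of_nonneg_left _ (abs_nonneg _)
            rw [abs_le]; constructor <;> linarith [hx.1, hx.2]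
        _ = γ i := by rw [mul_one, abs_of_nonneg (hγ i)]
    · simp only [h, if_false, abs_zero, mul_zero]
      exact hγ i
  have hmp : ∀ i : ι, MeasurePreserving (Function.eval i) μ (μ0) :=
    fun i => eval_measurePreserving (fun _ => μ0) i
  have hcompint : ∀ i, Integrable (fun X : ι → ℝ => g i (X i)) μ := by
    intro i
    exact ((hmp i).integrable_comp (hgmeas i).aestronglyMeasurable).mpr (hgint i)
  have hint_eq : ∀ i, (∫ X : ι → ℝ, g i (X i) ∂μ) = ∫ x, g i x ∂μ0 := by
    intro i
    rw [← (hmp i).map_eq, integral_map (measurable_pi_apply i).aemeasurable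
      (by rw [(hmp i).map_eq]; exact (hgmeas i).aestronglyMeasurable)]
  have hswap : (∫ X : ι → ℝ,
      (∑ i, γ i * (1 - X i) * (if b i < X i then (1 : ℝ) else 0)) ∂μ)
      = ∑ i, ∫ x, g i x ∂μ0 := by
    have : (fun X : ι → ℝ => ∑ i, γ i * (1 - X i) * (if b i < X i then (1 : ℝ) else 0))
        = fun X : ι → ℝ => ∑ i, g i (X i) := by
      funext X; apply Finset.sum_congr rfl; intro i _; rw [hg]; ring
    rw [this, integral_finset_sum _ (fun i _ => hcompint i)]
    exact Finset.sum_congr rfl fun i _ => hint_eq i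
  have hval : ∀ i, (∫ x, g i x ∂μ0) = γ i * ((1 - b i) ^ 2 / 2) := by
    intro i
    rw [hg]
    simp only
    rw [integral_const_mul, one_dim_integral (b i) (hb0 i) (hb1 i)]
  rw [hswap]
  simp_rw [hval]
  -- now the purely algebraic part
  have hCS : (∑ i, γ i * (1 - b i)) ^ 2 ≤ ∑ i, γ i * (1 - b i) ^ 2 := by
    have h := Finset.sum_mul_sq_le_sq_mul_sq Finset.univ
      (fun i => Real.sqrt (γ i)) (fun i => Real.sqrt (γ i) * (1 - b i))
    have h1 : ∀ i : ι, Real.sqrt (γ i) * (Real.sqrt (γ i) * (1 - b i)) = γ i * (1 - b i) := by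
      intro i; rw [← mul_assoc, Real.mul_self_sqrt (hγ i)]
    have h2 : ∀ i : ι, Real.sqrt (γ i) ^ 2 = γ i := fun i => Real.sq_sqrt (hγ i)
    have h3 : ∀ i : ι, (Real.sqrt (γ i) * (1 - b i)) ^ 2 = γ i * (1 - b i) ^ 2 := by
      intro i; rw [mul_pow, Real.sq_sqrt (hγ i)]
    simp_rw [h1, h2, h3, hγsum, one_mul] at h
    exact h
  have hsum1 : (∑ i, γ i * (1 - b i)) = 1 - ∑ i, γ i * b i := by
    simp_rw [mul_sub, mul_one, Finset.sum_sub_distrib, hγsum]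
  have hBle : (1 - B) ^ 2 ≤ (∑ i, γ i * (1 - b i)) ^ 2 := by
    rw [hsum1]
    apply pow_le_pow_left₀ (by linarith) (by linarith)
  have : (1 - B) ^ 2 ≤ ∑ i, γ i * (1 - b i) ^ 2 := le_trans hBle hCS
  calc (1 - B) ^ 2 / 2 ≤ (∑ i, γ i * (1 - b i) ^ 2) / 2 := by linarith
    _ = ∑ i, γ i * ((1 - b i) ^ 2 / 2) := by
        rw [Finset.sum_div]; exact Finset.sum_congr rfl fun i _ => by ring
end

section
/- Let m and k be integers with 2 ≤ k ≤ m, let B be a real number with 0 < B < 1, and let v : ℕ → ℝ be monotone nondecreasing with v(0) = 0, v(i + j) ≤ v(i) + v(j) for all naturals i, j, and v(m) = 1. Set q = ⌈m/k⌉. Then v(q) − q·B/(m − q + 1) ≥ 1/k − B/(k−1) − (1/m)·(B·k/(k−1)). -/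
/-- Quantitative content of Theorem 5: the constant-price strategy on m identical
    items with target allocation q = ⌈m/k⌉ yields profit at least
    t_{k−1}(B) − (1/m)·(B·k/(k−1)). -/
theorem subadditive_identical_lower_bound (m k : ℕ) (hk : 2 ≤ k) (hkm : k ≤ m)
    (B : ℝ) (hB0 : 0 < B) (hB1 : B < 1)
    (v : ℕ → ℝ) (h0 : v 0 = 0) (hmono : Monotone v)
    (hsub : ∀ i j : ℕ, v (i + j) ≤ v i + v j) (hnorm : v m = 1) :
    1 / (k : ℝ) - B / ((k : ℝ) - 1) - (1 / (m : ℝ)) * (B * k / ((k : ℝ) - 1))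
      ≤ v ⌈(m : ℝ) / k⌉₊
          - (⌈(m : ℝ) / k⌉₊ : ℝ) * B / ((m : ℝ) - (⌈(m : ℝ) / k⌉₊ : ℝ) + 1) := by
  set qn : ℕ := ⌈(m : ℝ) / k⌉₊ with hqn
  have hk0 : (0:ℝ) < k := by positivity
  have hk2 : (2:ℝ) ≤ k := by exact_mod_cast hk
  have hm2 : (2:ℝ) ≤ m := le_trans hk2 (by exact_mod_cast hkm)
  have hm0 : (0:ℝ) < m := by linarith
  have h1 : (m:ℝ)/k ≤ qn := Nat.le_ceil _
  have h2 : (qn:ℝ) < (m:ℝ)/k + 1 := Nat.ceil_lt_add_one (by positivity)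
  -- qn ≤ m
  have hqm : (qn:ℝ) ≤ m := by
    have : qn ≤ m := Nat.ceil_le.mpr (by
      rw [div_le_iff₀ hk0]; nlinarith)
    exact_mod_cast this
  have hd : (0:ℝ) < (m:ℝ) - qn + 1 := by linarith
  -- repeated subadditivity
  have hrep : ∀ n a : ℕ, v (n * a) ≤ n * v a := by
    intro n a
    induction n with
    | zero => simp [h0]
    | succ n ih =>
        have : v ((n+1) * a) = v (n * a + a) := by ring_nf
        rw [this]
        calc v (n * a + a) ≤ v (n * a) + v a := hsub _ _
          _ ≤ n * v a + v a := by linarith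
          _ = ((n+1 : ℕ) : ℝ) * v a := by push_cast; ring
  -- m ≤ k * qn
  have hmkq : m ≤ k * qn := by
    have : (m:ℝ) ≤ (k:ℝ) * qn := by
      rw [div_le_iff₀ hk0] at h1; linarith [h1]
    exact_mod_cast this
  have hvq : 1 / (k:ℝ) ≤ v qn := by
    have h3 : v m ≤ v (k * qn) := hmono hmkq
    have h4 : v (k * qn) ≤ k * v qn := hrep k qn
    rw [hnorm] at h3
    rw [div_le_iff₀ hk0]
    nlinarith
  -- price bound
  have e1 : (k:ℝ) * qn < m + k := by
    have := mul_lt_mul_of_pos_left h2 hk0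
    have hkm' : (k:ℝ) * ((m:ℝ)/k + 1) = m + k := by field_simp
    linarith [this, hkm'.le, hkm'.ge]
  have e2 : (m:ℝ) * ((k:ℝ) - 1) < k * ((m:ℝ) - qn + 1) := by nlinarith
  have core : (qn:ℝ) * ((m:ℝ) * ((k:ℝ)-1)) ≤ ((m:ℝ)+k) * ((m:ℝ) - qn + 1) := by
    have hq0 : (0:ℝ) ≤ qn := Nat.cast_nonneg _
    have hkk : (0:ℝ) < k * k := by positivity
    have hc0 : (0:ℝ) ≤ (m:ℝ) * ((k:ℝ)-1) := by nlinarith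
    have step1 : ((k:ℝ)*qn) * ((m:ℝ)*((k:ℝ)-1)) ≤ ((m:ℝ)+k) * ((m:ℝ)*((k:ℝ)-1)) :=
      mul_le_mul_of_nonneg_right e1.le hc0
    have step2 : ((m:ℝ)+k) * ((m:ℝ)*((k:ℝ)-1)) ≤ ((m:ℝ)+k) * ((k:ℝ)*((m:ℝ) - qn + 1)) :=
      mul_le_mul_of_nonneg_left e2.le (by linarith)
    nlinarith [step1, step2]
  have price : (qn:ℝ) * B / ((m:ℝ) - qn + 1)
      ≤ B / ((k:ℝ) - 1) + (1 / (m:ℝ)) * (B * k / ((k:ℝ) - 1)) := by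
    have hk1 : ((k:ℝ) - 1) ≠ 0 := by linarith
    have hm' : (m:ℝ) ≠ 0 := by linarith
    have hrhs : B / ((k:ℝ) - 1) + (1 / (m:ℝ)) * (B * k / ((k:ℝ) - 1))
        = B * ((m:ℝ) + k) / ((m:ℝ) * ((k:ℝ) - 1)) := by
      rw [eq_div_iff (by positivity : (m:ℝ) * ((k:ℝ)-1) ≠ 0)]
      field_simp
    rw [hrhs, div_le_div_iff₀ hd (by nlinarith)]
    have := mul_le_mul_of_nonneg_left core hB0.le
    linarith [this]
  linarith [hvq, price]
end
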